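/- Let T be a tree with vertices listed in an order v_1, …, v_n such that every prefix graph T_i is connected, and let S be any dominating set of T whose induced subgraph has c(S) connected components. Then T has an incremental dominating set R'' with |R''| ≤ |S| + c(S). -/

import Mathlib

/-- `D` is a dominating set of `G`: every vertex is in `D` or adjacent to a vertex of `D`. -/
def IsDomSet {V : Type*} (G : SimpleGraph V) (D : Finset V) : Prop :=
  ∀ v : V, v ∈ D ∨ ∃ u ∈ D, G.Adj u v

/-- The number of connected components of the subgraph of `G` induced by `S`. -/
noncomputable def numComponents {V : Type*} (G : SimpleGraph V) (S : Finset V) : ℕ :=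
  Nat.card (G.induce (↑S : Set V)).ConnectedComponent
/-- `D` is a dominating set of the prefix graph `G_i` (induced on the first `i`
vertices `v_1, …, v_i`, i.e. the vertices of `Fin n` with value `< i`);
here `D` is assumed to consist of vertices of the prefix, so that adjacency
in `G_i` coincides with adjacency in `G`. -/
def PrefixDom {n : ℕ} (G : SimpleGraph (Fin n)) (i : ℕ) (D : Finset (Fin n)) : Prop :=
  ∀ v : Fin n, v.val < i → v ∈ D ∨ ∃ u ∈ D, G.Adj u v

/-- The natural ordering `v_1, …, v_n` of `Fin n` is always-connected:
every prefix graph `G_i` (for `1 ≤ i ≤ n`) is connected. -/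
def AlwaysConnected {n : ℕ} (G : SimpleGraph (Fin n)) : Prop :=
  ∀ i : ℕ, 1 ≤ i → i ≤ n → (G.induce {v : Fin n | v.val < i}).Connected

/-- `D 1 ⊆ D 2 ⊆ ⋯ ⊆ D n` is a chain in which each `D i` is a subset of
`{v_1, …, v_i}` that is a dominating set of the prefix graph `G_i`. -/
def IncDomChain {n : ℕ} (G : SimpleGraph (Fin n)) (D : ℕ → Finset (Fin n)) : Prop :=
  (∀ i : ℕ, 1 ≤ i → i < n → D i ⊆ D (i + 1)) ∧
  (∀ i : ℕ, 1 ≤ i → i ≤ n → (∀ v ∈ D i, v.val < i) ∧ PrefixDom G i (D i))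

/-- `R` is an incremental dominating set of `G`: the final set `D n` of some
incremental dominating chain. -/
def IsIncDomSet {n : ℕ} (G : SimpleGraph (Fin n)) (R : Finset (Fin n)) : Prop :=
  ∃ D : ℕ → Finset (Fin n), IncDomChain G D ∧ R = D n

/-- An incremental connected dominating chain: additionally, each `D i`
induces a connected subgraph. -/
def IncConnDomChain {n : ℕ} (G : SimpleGraph (Fin n)) (D : ℕ → Finset (Fin n)) : Prop :=
  IncDomChain G D ∧
    ∀ i : ℕ, 1 ≤ i → i ≤ n → (G.induce (↑(D i) : Set (Fin n))).Connected

/-- `R` is an incremental connected dominating set of `G`. -/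
def IsIncConnDomSet {n : ℕ} (G : SimpleGraph (Fin n)) (R : Finset (Fin n)) : Prop :=
  ∃ D : ℕ → Finset (Fin n), IncConnDomChain G D ∧ R = D n

/-- In an acyclic graph, the support of a path between two vertices is contained
in the support of any walk between the same two vertices. -/
lemma acyclic_path_support_subset {V : Type*} {G : SimpleGraph V} (hG : G.IsAcyclic)
    {a b : V} (p q : G.Walk a b) (hp : p.IsPath) : p.support ⊆ q.support := by
  classical
  have huniq := SimpleGraph.isAcyclic_iff_path_unique.mp hG
  have h : (⟨p, hp⟩ : G.Path a b) = q.toPath := huniq _ _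
  have hps : p.support = (q.toPath : G.Walk a b).support := by rw [← h]
  rw [hps]
  exact q.support_toPath_subset

/-- If `T` is a tree presented in an always-connected order and `S`
is any dominating set of `T` whose induced subgraph has `c(S)` components, then `T`
has an incremental dominating set `R''` with `|R''| ≤ |S| + c(S)`. -/
theorem inc_dominating_of_dominating_tree {n : ℕ} (hn : 1 ≤ n)
    (T : SimpleGraph (Fin n)) (htree : T.Connected ∧ T.IsAcyclic)
    (hconn : AlwaysConnected T)
    (S : Finset (Fin n)) (hS : IsDomSet T S) :
    ∃ R'' : Finset (Fin n), IsIncDomSet T R'' ∧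
      R''.card ≤ S.card + numComponents T S := by
  classical
  obtain ⟨hTc, hTa⟩ := htree
  set Sset : Set (Fin n) := (↑S : Set (Fin n)) with hSset
  set H : SimpleGraph Sset := T.induce Sset with hHdef
  -- the closed neighborhood of a component, as a set of vertices of `T`
  set A : H.ConnectedComponent → Set (Fin n) := fun c =>
    {v | ∃ u : Sset, H.connectedComponentMk u = c ∧ ((u : Fin n) = v ∨ T.Adj u v)} with hAdef
  set As : H.ConnectedComponent → Finset (Fin n) :=
    fun c => Finset.univ.filter (· ∈ A c) with hAsdef
  have hmemAs : ∀ c v, v ∈ As c ↔ v ∈ A c := by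
    intro c v; simp [hAsdef]
  have hAne : ∀ c, (As c).Nonempty := by
    intro c
    obtain ⟨u, hrep⟩ := Quot.exists_rep c
    exact ⟨(u : Fin n), (hmemAs _ _).mpr ⟨u, hrep, Or.inl rfl⟩⟩
  -- the earliest vertex of the closed neighborhood of each component
  set F : H.ConnectedComponent → Fin n := fun c => (As c).min' (hAne c) with hFdef
  have hFmem : ∀ c, F c ∈ A c := fun c => (hmemAs _ _).mp ((As c).min'_mem (hAne c))
  have hFle : ∀ c v, v ∈ A c → (F c).val ≤ v.val := by
    intro c v hv
    exact (As c).min'_le v ((hmemAs _ _).mpr hv)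
  -- the extra set: one earliest vertex per component met by `S`
  set g : {x // x ∈ S} → H.ConnectedComponent :=
    fun u => H.connectedComponentMk ⟨u.1, Finset.mem_coe.mpr u.2⟩ with hgdef
  set extra : Finset (Fin n) := (S.attach.image g).image F with hextra
  set R : Finset (Fin n) := S ∪ extra with hR
  have hextracard : extra.card ≤ numComponents T S := by
    haveI : Finite H.ConnectedComponent := Quot.finite _
    haveI := Fintype.ofFinite H.ConnectedComponent
    calc extra.card ≤ (S.attach.image g).card := Finset.card_image_le
      _ ≤ Fintype.card H.ConnectedComponent := Finset.card_le_univ _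
      _ = Nat.card H.ConnectedComponent := (Nat.card_eq_fintype_card).symm
      _ = numComponents T S := rfl
  -- the incremental chain
  set D : ℕ → Finset (Fin n) := fun i => R.filter (fun v => v.val < i) with hD
  -- key domination property
  have hdom : ∀ i : ℕ, i ≤ n → PrefixDom T i (D i) := by
    intro i hin v hv
    by_cases hvS : v ∈ S
    · left
      simp only [hD, Finset.mem_filter, hR, Finset.mem_union]
      exact ⟨Or.inl hvS, hv⟩
    rcases hS v with h | ⟨u, huS, hadj⟩
    · exact absurd h hvS
    by_cases hnear : ∃ u' : Fin n, u' ∈ S ∧ u'.val < i ∧ T.Adj u' v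
    · obtain ⟨u', h1, h2, h3⟩ := hnear
      right
      refine ⟨u', ?_, h3⟩
      simp only [hD, Finset.mem_filter, hR, Finset.mem_union]
      exact ⟨Or.inl h1, h2⟩
    push_neg at hnear
    -- main case: every `S`-neighbor of `v` is outside the prefix
    have h1i : 1 ≤ i := Nat.one_le_of_lt (Nat.lt_of_le_of_lt (Nat.zero_le _) hv)
    set c : H.ConnectedComponent := g ⟨u, huS⟩ with hc
    set w : Fin n := F c with hw
    have hvA : v ∈ A c := ⟨⟨u, Finset.mem_coe.mpr huS⟩, rfl, Or.inr hadj⟩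
    have hwv : w.val < i := Nat.lt_of_le_of_lt (hFle c v hvA) hv
    have hwextra : w ∈ extra := by
      simp only [hextra, Finset.mem_image]
      exact ⟨c, ⟨⟨u, huS⟩, Finset.mem_attach _ _, rfl⟩, rfl⟩
    have key : w = v ∨ T.Adj w v := by
      by_contra hcon
      push_neg at hcon
      obtain ⟨hwne, hwnadj⟩ := hcon
      -- a walk from w to v inside the prefix
      have hconn' := (hconn i h1i hin).preconnected
        ⟨w, by exact hwv⟩ ⟨v, by exact hv⟩
      obtain ⟨q0⟩ := hconn'
      set ι := SimpleGraph.Embedding.induce (G := T) {x : Fin n | x.val < i} with hι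
      set qT : T.Walk w v := q0.map ι.toHom with hqT
      have hqTsupp : ∀ x ∈ qT.support, x.val < i := by
        intro x hx
        have hx : x ∈ (q0.map ι.toHom).support := hx
        rw [SimpleGraph.Walk.support_map] at hx
        obtain ⟨y, _, rfl⟩ := List.mem_map.mp hx
        exact y.2
      -- a walk from w to v through the component c and the two edges
      obtain ⟨u1, hcu1, hcase⟩ := hFmem c
      have hreachS : H.Reachable u1 ⟨u, Finset.mem_coe.mpr huS⟩ := by
        refine SimpleGraph.ConnectedComponent.exact ?_
        rw [hcu1]
      obtain ⟨p0⟩ := hreachS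
      set ιS := SimpleGraph.Embedding.induce (G := T) Sset with hιS
      set pS : T.Walk (u1 : Fin n) u := p0.map ιS.toHom with hpS
      have hpSsupp : ∀ x ∈ pS.support, x ∈ S := by
        intro x hx
        have hx : x ∈ (p0.map ιS.toHom).support := hx
        rw [SimpleGraph.Walk.support_map] at hx
        obtain ⟨y, _, rfl⟩ := List.mem_map.mp hx
        exact Finset.mem_coe.mp y.2
      have hW2 : ∃ W2 : T.Walk w v, ∀ x ∈ W2.support, x = w ∨ x = v ∨ x ∈ S := by
        rcases hcase with heq | hadj1
        · refine ⟨(pS.copy heq rfl).append (SimpleGraph.Walk.cons hadj .nil), ?_⟩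
          intro x hx
          rw [SimpleGraph.Walk.support_append] at hx
          rcases List.mem_append.mp hx with hx | hx
          · rw [SimpleGraph.Walk.support_copy] at hx
            exact Or.inr (Or.inr (hpSsupp x hx))
          · have : x ∈ (SimpleGraph.Walk.cons hadj (.nil : T.Walk v v)).support :=
              List.mem_of_mem_tail hx
            simp only [SimpleGraph.Walk.support_cons, SimpleGraph.Walk.support_nil,
              List.mem_cons, List.mem_singleton] at this
            rcases this with rfl | h
            · exact Or.inr (Or.inr huS)
            · simp only [List.not_mem_nil, or_false] at h
              exact Or.inr (Or.inl h)
        · refine ⟨(SimpleGraph.Walk.cons hadj1.symm pS).append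
            (SimpleGraph.Walk.cons hadj .nil), ?_⟩
          intro x hx
          rw [SimpleGraph.Walk.support_append] at hx
          rcases List.mem_append.mp hx with hx | hx
          · rw [SimpleGraph.Walk.support_cons] at hx
            rcases List.mem_cons.mp hx with rfl | hx
            · exact Or.inl rfl
            · exact Or.inr (Or.inr (hpSsupp x hx))
          · have : x ∈ (SimpleGraph.Walk.cons hadj (.nil : T.Walk v v)).support :=
              List.mem_of_mem_tail hx
            simp only [SimpleGraph.Walk.support_cons, SimpleGraph.Walk.support_nil,
              List.mem_cons, List.mem_singleton] at this
            rcases this with rfl | h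
            · exact Or.inr (Or.inr huS)
            · simp only [List.not_mem_nil, or_false] at h
              exact Or.inr (Or.inl h)
      obtain ⟨W2, hW2supp⟩ := hW2
      -- the unique path from w to v
      set P : T.Walk w v := W2.bypass with hP
      have hPpath : P.IsPath := W2.bypass_isPath
      have hPsub2 : P.support ⊆ W2.support := W2.support_bypass_subset
      have hPsub1 : P.support ⊆ qT.support :=
        acyclic_path_support_subset hTa P qT hPpath
      -- the neighbor of v on P
      obtain ⟨x, hxadj, q', hq'⟩ :=
        SimpleGraph.Walk.exists_eq_cons_of_ne (Ne.symm hwne) P.reverse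
      have hxP : x ∈ P.support := by
        have : x ∈ P.reverse.support := by
          rw [hq', SimpleGraph.Walk.support_cons]
          exact List.mem_cons_of_mem _ q'.start_mem_support
        rwa [SimpleGraph.Walk.support_reverse, List.mem_reverse] at this
      have hxv : x ≠ v := by
        have hrp : P.reverse.IsPath := hPpath.reverse
        rw [hq', SimpleGraph.Walk.cons_isPath_iff] at hrp
        intro h
        exact hrp.2 (h ▸ q'.start_mem_support)
      have hxi : x.val < i := hqTsupp x (hPsub1 hxP)
      rcases hW2supp x (hPsub2 hxP) with rfl | rfl | hxS
      · exact hwnadj hxadj.symm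
      · exact hxv rfl
      · exact hnear x hxS hxi hxadj.symm
    rcases key with heq | hadjwv
    · left
      simp only [hD, Finset.mem_filter, hR, Finset.mem_union]
      exact ⟨Or.inr (heq ▸ hwextra), hv⟩
    · right
      refine ⟨w, ?_, hadjwv⟩
      simp only [hD, Finset.mem_filter, hR, Finset.mem_union]
      exact ⟨Or.inr hwextra, hwv⟩
  refine ⟨R, ⟨D, ⟨?_, ?_⟩, ?_⟩, ?_⟩
  · intro i _ _ a ha
    simp only [hD, Finset.mem_filter] at ha ⊢
    exact ⟨ha.1, Nat.lt_succ_of_lt ha.2⟩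
  · intro i h1 h2
    refine ⟨?_, hdom i h2⟩
    intro v hvD
    exact (Finset.mem_filter.mp hvD).2
  · apply Finset.ext
    intro a
    simp only [hD, Finset.mem_filter]
    exact ⟨fun h => ⟨h, a.isLt⟩, fun h => h.1⟩
  · calc R.card ≤ S.card + extra.card := Finset.card_union_le _ _
      _ ≤ S.card + numComponents T S := Nat.add_le_add_left hextracard _
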